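/- The r-folded Reed–Solomon code FRS_{q,γ,r,k} is a multilinear code over F_q^r whose associated matroid is the uniform matroid U_{k/r,(q−1)/r}; consequently its generalized Hamming weights are d_i = (q−1−k)/r + i for 1 ≤ i ≤ k/r, i.e., the code is MDS. -/

import Mathlib

/-- Projection of a subspace of `(F_q^r)^n = (Fin n → Fin r → K)` to the coordinates
in `X ⊆ {1,…,n}`. -/
noncomputable def projSub {K : Type*} [Field K] {r n : ℕ}
    (C : Submodule K (Fin n → Fin r → K)) (X : Finset (Fin n)) :
    Submodule K ({ i // i ∈ X } → Fin r → K) :=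
  C.map (LinearMap.funLeft K (Fin r → K) (fun i : { i // i ∈ X } => (i : Fin n)))

/-- `C` is a multilinear code over `F_q^r`: all projections have `F_q`-dimension
divisible by `r`. -/
def IsMultilinearCode {K : Type*} [Field K] (r n : ℕ)
    (C : Submodule K (Fin n → Fin r → K)) : Prop :=
  ∀ X : Finset (Fin n), r ∣ Module.finrank K (projSub C X)

/-- The evaluation map sending coefficient vectors of polynomials of degree `< k`
to their evaluations at the nodes `ν`. -/
noncomputable def evalMapAux {K : Type*} [Field K] (k : ℕ) {ι : Type*} [Fintype ι]
    (ν : ι → K) : (Fin k → K) →ₗ[K] (ι → K) where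
  toFun a := fun p => ∑ l : Fin k, a l * ν p ^ (l : ℕ)
  map_add' a b := by
    funext p
    simp [add_mul, Finset.sum_add_distrib]
  map_smul' c a := by
    funext p
    simp [Finset.mul_sum, mul_assoc]

lemma finrank_range_evalMapAux {K : Type*} [Field K] (k : ℕ) {ι : Type*} [Fintype ι]
    (ν : ι → K) (hν : Function.Injective ν) :
    Module.finrank K (LinearMap.range (evalMapAux k ν)) = min (Fintype.card ι) k := by
  classical
  rcases le_total k (Fintype.card ι) with hle | hle
  · -- injective case
    rw [min_eq_right hle]
    have hinj : Function.Injective (evalMapAux k ν) := by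
      rw [← LinearMap.ker_eq_bot]
      rw [LinearMap.ker_eq_bot']
      intro a ha
      rcases Nat.eq_zero_or_pos k with hk0 | hk0
      · subst hk0; funext l; exact l.elim0
      set P : Polynomial K := ∑ l : Fin k, Polynomial.C (a l) * Polynomial.X ^ (l : ℕ)
        with hPdef
      have hcoeff : ∀ l : Fin k, P.coeff (l : ℕ) = a l := by
        intro l0
        rw [hPdef, Polynomial.finset_sum_coeff]
        rw [Finset.sum_eq_single l0]
        · simp
        · intro l _ hl
          have hne : (l : ℕ) ≠ (l0 : ℕ) := fun h => hl (Fin.val_injective h)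
          simp only [Polynomial.coeff_C_mul, Polynomial.coeff_X_pow]
          rw [if_neg (Ne.symm hne), mul_zero]
        · simp
      have hdeg : P.natDegree < k := by
        have : P.natDegree ≤ k - 1 := by
          apply Polynomial.natDegree_sum_le_of_forall_le
          intro l _
          refine le_trans (Polynomial.natDegree_C_mul_le _ _) ?_
          rw [Polynomial.natDegree_X_pow]
          omega
        omega
      have heval : ∀ p : ι, P.eval (ν p) = 0 := by
        intro p
        have h0 : evalMapAux k ν a p = 0 := by rw [ha]; rfl
        rw [hPdef]
        simpa [Polynomial.eval_finset_sum] using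
          (show (∑ l : Fin k, a l * ν p ^ (l : ℕ)) = 0 from h0)
      have hP0 : P = 0 :=
        Polynomial.eq_zero_of_natDegree_lt_card_of_eval_eq_zero P hν heval
          (lt_of_lt_of_le hdeg hle)
      funext l
      have := hcoeff l
      rw [hP0] at this
      simpa using this.symm
    rw [LinearMap.finrank_range_of_inj hinj, Module.finrank_pi, Fintype.card_fin]
  · -- surjective case
    rw [min_eq_left hle]
    have hsurj : Function.Surjective (evalMapAux k ν) := by
      intro w
      rcases Nat.eq_zero_or_pos (Fintype.card ι) with hc0 | hc0
      · have : IsEmpty ι := Fintype.card_eq_zero_iff.mp hc0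
        exact ⟨0, funext fun p => isEmptyElim p⟩
      set P : Polynomial K := Lagrange.interpolate Finset.univ ν w with hPdef
      have hinjOn : Set.InjOn ν ↑(Finset.univ : Finset ι) := fun x _ y _ h => hν h
      have hdeg : P.degree < (Finset.univ : Finset ι).card :=
        Lagrange.degree_interpolate_lt w hinjOn
      have hnd : P.natDegree < k := by
        rcases eq_or_ne P 0 with h0 | h0
        · rw [h0]
          simpa using lt_of_lt_of_le hc0 hle
        · rw [Polynomial.natDegree_lt_iff_degree_lt h0]
          refine lt_of_lt_of_le hdeg ?_
          simpa using hle
      refine ⟨fun l => P.coeff (l : ℕ), ?_⟩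
      funext p
      have : evalMapAux k ν (fun l => P.coeff (l : ℕ)) p
          = ∑ i ∈ Finset.range k, P.coeff i * ν p ^ i := by
        simpa [evalMapAux] using
          (Finset.sum_range (fun i => P.coeff i * ν p ^ i)).symm
      rw [this, ← Polynomial.eval_eq_sum_range' hnd]
      exact Lagrange.eval_interpolate_at_node w hinjOn (Finset.mem_univ p)
    rw [LinearMap.range_eq_top.mpr hsurj]
    rw [finrank_top, Module.finrank_pi]

/-- The full Reed–Solomon encoding map into the folded space. -/
noncomputable def RSmap {K : Type*} [Field K] (m r k : ℕ) (γ : K) :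
    (Fin k → K) →ₗ[K] (Fin m → Fin r → K) where
  toFun a := fun x j => ∑ l : Fin k, a l * γ ^ ((l : ℕ) * (x.1 * r + j.1 + 1))
  map_add' a b := by
    funext x j
    simp [add_mul, Finset.sum_add_distrib]
  map_smul' c a := by
    funext x j
    simp [Finset.mul_sum, mul_assoc]

/-- Explicit currying linear equivalence. -/
def curryLE (K : Type*) [Field K] (α β : Type*) :
    ((α × β) → K) ≃ₗ[K] (α → β → K) where
  toFun f a b := f (a, b)
  invFun g p := g p.1 p.2
  map_add' _ _ := rfl
  map_smul' _ _ := rfl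
  left_inv _ := rfl
  right_inv _ := rfl

theorem folded_reed_solomon_multilinear_uniform_MDS
    {K : Type*} [Field K] [Fintype K] (m r k : ℕ)
    (hq : Fintype.card K = m * r + 1) (hr2 : 2 ≤ r) (hm1 : 1 ≤ m)
    (hrk : r ∣ k) (hk : k ≤ m * r)
    (γ : K) (hγ : ∀ z : K, z ≠ 0 → ∃ t : ℕ, γ ^ t = z)
    (Csub : Submodule K (Fin m → Fin r → K))
    (hCsub : (Csub : Set (Fin m → Fin r → K)) =
      {w | ∃ a : Fin k → K, ∀ (x : Fin m) (j : Fin r),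
        w x j = ∑ l : Fin k, a l * γ ^ ((l : ℕ) * (x.1 * r + j.1 + 1))}) :
    IsMultilinearCode r m Csub ∧
    (∀ X : Finset (Fin m),
      Module.finrank K (projSub Csub X) = min (r * X.card) k) ∧
    (∀ i : ℕ, 1 ≤ i → i ≤ k / r →
      sInf {c : ℕ | ∃ X : Finset (Fin m), X.card = c ∧
          Module.finrank K (projSub Csub Xᶜ) + r * i = k}
        = (m * r - k) / r + i) := by
  classical
  have hr0 : 0 < r := by omega
  have hmr : 0 < m * r := by positivity
  -- γ is nonzero
  have hγ0 : γ ≠ 0 := by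
    intro h0
    have hcard : 2 < Fintype.card K := by
      have h2 : 1 * 2 ≤ m * r := Nat.mul_le_mul hm1 hr2
      omega
    obtain ⟨z, hz⟩ : ∃ z : K, z ∉ ({0, 1} : Finset K) := by
      by_contra hcon
      push_neg at hcon
      have hA : Fintype.card K ≤ ({0, 1} : Finset K).card :=
        Finset.card_le_card_of_injOn id (fun x _ => hcon x) (fun _ _ _ _ h => h)
      have hB : ({0, 1} : Finset K).card ≤ 2 :=
        (Finset.card_insert_le _ _).trans (by simp)
      omega
    simp only [Finset.mem_insert, Finset.mem_singleton, not_or] at hz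
    obtain ⟨t, ht⟩ := hγ z hz.1
    rcases Nat.eq_zero_or_pos t with ht0 | ht0
    · rw [ht0, pow_zero] at ht; exact hz.2 ht.symm
    · rw [h0, zero_pow (by omega)] at ht; exact hz.1 ht.symm
  -- order of γ is m * r, via the unit group
  obtain ⟨u, huc, horder⟩ : ∃ u : Kˣ, (u : K) = γ ∧ orderOf u = m * r := by
    have hu : IsUnit γ := hγ0.isUnit
    refine ⟨hu.unit, hu.unit_spec, ?_⟩
    have hall : ∀ z : Kˣ, z ∈ Subgroup.zpowers hu.unit := by
      intro z
      obtain ⟨t, ht⟩ := hγ (z : K) z.ne_zero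
      refine Subgroup.mem_zpowers_iff.mpr ⟨(t : ℤ), ?_⟩
      have : hu.unit ^ (t : ℤ) = hu.unit ^ t := zpow_natCast _ t
      rw [this]
      ext
      rw [Units.val_pow_eq_pow_val, hu.unit_spec, ht]
    have hcardu : Nat.card Kˣ = m * r := by
      classical
      rw [Nat.card_eq_fintype_card, Fintype.card_units, hq]
      omega
    rw [orderOf_eq_card_of_forall_mem_zpowers hall, hcardu]
  -- distinctness of powers in [1, m*r]
  have hpowinj : ∀ p q : ℕ, 1 ≤ p → p ≤ m * r → 1 ≤ q → q ≤ m * r →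
      γ ^ p = γ ^ q → p = q := by
    intro p q hp1 hp2 hq1 hq2 hpq
    have hupq : u ^ p = u ^ q := by
      ext
      rw [Units.val_pow_eq_pow_val, Units.val_pow_eq_pow_val, huc, hpq]
    have hmod : p % (m * r) = q % (m * r) := by
      have := (pow_eq_pow_iff_modEq (x := u)).mp hupq
      rwa [horder] at this
    rcases eq_or_lt_of_le hp2 with hp | hp
    · rcases eq_or_lt_of_le hq2 with hq | hq
      · omega
      · rw [hp, Nat.mod_self, Nat.mod_eq_of_lt hq] at hmod; omega
    · rcases eq_or_lt_of_le hq2 with hq | hq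
      · rw [hq, Nat.mod_self, Nat.mod_eq_of_lt hp] at hmod; omega
      · rwa [Nat.mod_eq_of_lt hp, Nat.mod_eq_of_lt hq] at hmod
  -- Csub is the range of the RS encoding map
  have hCrange : Csub = LinearMap.range (RSmap m r k γ) := by
    apply SetLike.ext'
    rw [hCsub]
    ext w
    constructor
    · rintro ⟨a, ha⟩
      exact ⟨a, by funext x j; exact (ha x j).symm⟩
    · rintro ⟨a, ha⟩
      exact ⟨a, fun x j => by rw [← ha]; rfl⟩
  -- the key projection rank formula
  have hproj : ∀ X : Finset (Fin m),
      Module.finrank K (projSub Csub X) = min (r * X.card) k := by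
    intro X
    set ν : ({ i // i ∈ X } × Fin r) → K :=
      fun p => γ ^ ((p.1 : Fin m).1 * r + (p.2 : ℕ) + 1) with hνdef
    have hbound : ∀ p : { i // i ∈ X } × Fin r,
        1 ≤ (p.1 : Fin m).1 * r + (p.2 : ℕ) + 1 ∧
        (p.1 : Fin m).1 * r + (p.2 : ℕ) + 1 ≤ m * r := by
      intro p
      have h1 : (p.1 : Fin m).1 < m := (p.1 : Fin m).2
      have h2 : (p.2 : ℕ) < r := p.2.2
      have h3 : ((p.1 : Fin m).1 + 1) * r ≤ m * r := Nat.mul_le_mul_right r (by omega)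
      have h4 : (p.1 : Fin m).1 * r + r = ((p.1 : Fin m).1 + 1) * r := by ring
      omega
    have hνinj : Function.Injective ν := by
      intro p q hpq
      have hb1 := hbound p
      have hb2 := hbound q
      have heq := hpowinj _ _ hb1.1 hb1.2 hb2.1 hb2.2 hpq
      have heq' : (p.1 : Fin m).1 * r + (p.2 : ℕ) = (q.1 : Fin m).1 * r + (q.2 : ℕ) := by
        omega
      have hdiv : (p.1 : Fin m).1 = (q.1 : Fin m).1 := by
        have h1 := Nat.mul_add_div hr0 ((p.1 : Fin m).1) ((p.2 : ℕ))
        have h2 := Nat.mul_add_div hr0 ((q.1 : Fin m).1) ((q.2 : ℕ))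
        have e1 : (p.1 : Fin m).1 * r + (p.2 : ℕ) = r * (p.1 : Fin m).1 + (p.2 : ℕ) := by ring
        have e2 : (q.1 : Fin m).1 * r + (q.2 : ℕ) = r * (q.1 : Fin m).1 + (q.2 : ℕ) := by ring
        have hp2 : (p.2 : ℕ) / r = 0 := Nat.div_eq_of_lt p.2.2
        have hq2 : (q.2 : ℕ) / r = 0 := Nat.div_eq_of_lt q.2.2
        calc (p.1 : Fin m).1 = ((p.1 : Fin m).1 * r + (p.2 : ℕ)) / r := by
              rw [e1, h1, hp2, Nat.add_zero]
          _ = ((q.1 : Fin m).1 * r + (q.2 : ℕ)) / r := by rw [heq']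
          _ = (q.1 : Fin m).1 := by rw [e2, h2, hq2, Nat.add_zero]
      have hmod : (p.2 : ℕ) = (q.2 : ℕ) := by
        have : (p.1 : Fin m).1 * r = (q.1 : Fin m).1 * r := by rw [hdiv]
        omega
      have hfst : p.1 = q.1 := Subtype.ext (Fin.ext hdiv)
      have hsnd : p.2 = q.2 := Fin.ext hmod
      exact Prod.ext hfst hsnd
    -- identify the projected code with the image of the evaluation map
    have hcomp : LinearMap.funLeft K (Fin r → K)
          (fun i : { i // i ∈ X } => (i : Fin m)) ∘ₗ RSmap m r k γ
        = (curryLE K { i // i ∈ X } (Fin r) : ((({ i // i ∈ X } × Fin r) → K) →ₗ[K] _)) ∘ₗ evalMapAux k ν := by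
      apply LinearMap.ext
      intro a
      funext i j
      show ∑ l : Fin k, a l * γ ^ ((l : ℕ) * ((i : Fin m).1 * r + (j : ℕ) + 1))
          = ∑ l : Fin k, a l * ν (i, j) ^ (l : ℕ)
      apply Finset.sum_congr rfl
      intro l _
      rw [hνdef]
      rw [mul_comm (l : ℕ) _, pow_mul]
    have hps : projSub Csub X
        = Submodule.map
            (curryLE K { i // i ∈ X } (Fin r) : ((({ i // i ∈ X } × Fin r) → K) →ₗ[K] _))
            (LinearMap.range (evalMapAux k ν)) := by
      rw [projSub, hCrange, ← LinearMap.range_comp, hcomp, LinearMap.range_comp]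
    rw [hps, LinearEquiv.finrank_map_eq (curryLE K { i // i ∈ X } (Fin r)),
      finrank_range_evalMapAux k ν hνinj]
    congr 1
    rw [Fintype.card_prod, Fintype.card_coe, Fintype.card_fin]
    ring
  obtain ⟨t, hkt⟩ := hrk
  have htm : t ≤ m := by
    have h1 : r * t ≤ r * m := by
      calc r * t = k := hkt.symm
        _ ≤ m * r := hk
        _ = r * m := mul_comm m r
    exact Nat.le_of_mul_le_mul_left h1 hr0
  refine ⟨?_, hproj, ?_⟩
  · -- multilinearity
    intro X
    rw [hproj X]
    rcases le_total (r * X.card) k with h | h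
    · rw [min_eq_left h]; exact dvd_mul_right r X.card
    · rw [min_eq_right h]; exact ⟨t, hkt⟩
  · -- generalized Hamming weights
    intro i hi1 hi2
    have hit : i ≤ t := by
      rw [hkt, Nat.mul_div_cancel_left t hr0] at hi2; exact hi2
    have hset : {c : ℕ | ∃ X : Finset (Fin m), X.card = c ∧
        Module.finrank K (projSub Csub Xᶜ) + r * i = k} = {m - t + i} := by
      ext c
      simp only [Set.mem_setOf_eq, Set.mem_singleton_iff]
      constructor
      · rintro ⟨X, hXc, heq⟩
        rw [hproj Xᶜ, Finset.card_compl, Fintype.card_fin, hXc] at heq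
        have hcm : c ≤ m := by
          rw [← hXc]
          exact le_trans (Finset.card_le_univ X) (by simp)
        rcases le_total (r * (m - c)) k with h | h
        · rw [min_eq_left h] at heq
          have : r * ((m - c) + i) = r * t := by rw [Nat.mul_add, heq, hkt]
          have h2 : (m - c) + i = t := Nat.eq_of_mul_eq_mul_left hr0 this
          omega
        · rw [min_eq_right h] at heq
          have hri : r * i = 0 := by omega
          rcases Nat.mul_eq_zero.mp hri with h' | h' <;> omega
      · intro hc
        have hcm : c ≤ m := by omega
        obtain ⟨X, _, hXc⟩ := Finset.exists_subset_card_eq (s := (Finset.univ : Finset (Fin m))) (n := c)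
          (by simpa using hcm)
        refine ⟨X, hXc, ?_⟩
        rw [hproj Xᶜ, Finset.card_compl, Fintype.card_fin, hXc]
        have hmc : m - c = t - i := by omega
        have hsum : r * (t - i) + r * i = k := by
          rw [← Nat.mul_add, Nat.sub_add_cancel hit, hkt]
        have hle : r * (t - i) ≤ k := by omega
        rw [hmc, min_eq_left hle, hsum]
    rw [hset, csInf_singleton]
    have : m * r - k = (m - t) * r := by
      rw [hkt, Nat.sub_mul, mul_comm r t]
    rw [this, Nat.mul_div_cancel _ hr0]
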